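/- Let G be a graph on n vertices with no isolated vertices. Then the self-similarity ISO(G) is at least (n-2)/4, where ISO(G) is the largest integer s such that G contains two edge-disjoint subgraphs with s edges each that are isomorphic as graphs. -/

import Mathlib

lemma exists_perm_comp {α β : Type*} [Fintype β] (f g : α → β)
    (hf : Function.Injective f) (hg : Function.Injective g) :
    ∃ π : Equiv.Perm β, ∀ x, π (f x) = g x := by
  classical
  haveI : Fintype α := Fintype.ofInjective f hf
  let e₀ : (Set.range f) ≃ (Set.range g) :=
    (Equiv.ofInjective f hf).symm.trans (Equiv.ofInjective g hg)
  have hcard : Fintype.card ((Set.range f)ᶜ : Set β) = Fintype.card ((Set.range g)ᶜ : Set β) := by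
    rw [Fintype.card_compl_set, Fintype.card_compl_set,
      Set.card_range_of_injective hf, Set.card_range_of_injective hg]
  let e' := Fintype.equivOfCardEq hcard
  refine ⟨(Equiv.Set.sumCompl (Set.range f)).symm.trans ((e₀.sumCongr e').trans
    (Equiv.Set.sumCompl (Set.range g))), fun x => ?_⟩
  have h1 : (Equiv.Set.sumCompl (Set.range f)).symm (f x) = Sum.inl ⟨f x, ⟨x, rfl⟩⟩ :=
    Equiv.Set.sumCompl_symm_apply_of_mem _
  simp [h1, e₀]

lemma gadget {V : Type*} [Fintype V] (G : SimpleGraph V) {ι : Type*} [Fintype ι]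
    (s : ι → ℕ) (c₁ c₂ : ι → V) (a b : (i : ι) → Fin (s i) → V)
    (adj₁ : ∀ i k, G.Adj (c₁ i) (a i k))
    (adj₂ : ∀ i k, G.Adj (c₂ i) (b i k))
    (inj₁ : ∀ i, Function.Injective (a i))
    (inj₂ : ∀ i, Function.Injective (b i))
    (d₁ : Pairwise fun i j => Disjoint (insert (c₁ i) (Set.range (a i)))
      (insert (c₁ j) (Set.range (a j))))
    (d₂ : Pairwise fun i j => Disjoint (insert (c₂ i) (Set.range (b i)))
      (insert (c₂ j) (Set.range (b j))))
    (ed : ∀ i j k l, s(c₁ i, a i k) ≠ s(c₂ j, b j l)) :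
    ∃ H₁ H₂ : SimpleGraph V, H₁ ≤ G ∧ H₂ ≤ G ∧
      Disjoint H₁.edgeSet H₂.edgeSet ∧ Nonempty (H₁ ≃g H₂) ∧
      H₁.edgeSet.ncard = ∑ i, s i ∧ H₂.edgeSet.ncard = ∑ i, s i := by
  classical
  set F₁ : (Σ i : ι, Option (Fin (s i))) → V :=
    fun z => z.2.elim (c₁ z.1) (a z.1) with hF₁
  set F₂ : (Σ i : ι, Option (Fin (s i))) → V :=
    fun z => z.2.elim (c₂ z.1) (b z.1) with hF₂
  have memF₁ : ∀ z : (Σ i : ι, Option (Fin (s i))),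
      F₁ z ∈ insert (c₁ z.1) (Set.range (a z.1)) := by
    rintro ⟨i, (_|k)⟩ <;> simp [F₁]
  have memF₂ : ∀ z : (Σ i : ι, Option (Fin (s i))),
      F₂ z ∈ insert (c₂ z.1) (Set.range (b z.1)) := by
    rintro ⟨i, (_|k)⟩ <;> simp [F₂]
  have samebase : ∀ {c : ι → V} {f : (i : ι) → Fin (s i) → V}
      (hd : Pairwise fun i j => Disjoint (insert (c i) (Set.range (f i)))
        (insert (c j) (Set.range (f j)))) {i j : ι} {x : V},
      x ∈ insert (c i) (Set.range (f i)) → x ∈ insert (c j) (Set.range (f j)) → i = j := by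
    intro c f hd i j x hxi hxj
    by_contra hne
    exact Set.disjoint_left.1 (hd hne) hxi hxj
  have injF₁ : Function.Injective F₁ := by
    rintro ⟨i, o⟩ ⟨j, o'⟩ heq
    obtain rfl : i = j := samebase d₁ (memF₁ ⟨i, o⟩) (heq ▸ memF₁ ⟨j, o'⟩)
    match o, o', heq with
    | none, none, _ => rfl
    | none, some k, heq => exact absurd heq (adj₁ i k).ne
    | some k, none, heq => exact absurd heq.symm (adj₁ i k).ne
    | some k, some l, heq => rw [inj₁ i (show a i k = a i l from heq)]
  have injF₂ : Function.Injective F₂ := by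
    rintro ⟨i, o⟩ ⟨j, o'⟩ heq
    obtain rfl : i = j := samebase d₂ (memF₂ ⟨i, o⟩) (heq ▸ memF₂ ⟨j, o'⟩)
    match o, o', heq with
    | none, none, _ => rfl
    | none, some k, heq => exact absurd heq (adj₂ i k).ne
    | some k, none, heq => exact absurd heq.symm (adj₂ i k).ne
    | some k, some l, heq => rw [inj₂ i (show b i k = b i l from heq)]
  set f₁ : (Σ i : ι, Fin (s i)) → Sym2 V := fun z => s(c₁ z.1, a z.1 z.2) with hf₁
  set f₂ : (Σ i : ι, Fin (s i)) → Sym2 V := fun z => s(c₂ z.1, b z.1 z.2) with hf₂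
  have injf₁ : Function.Injective f₁ := by
    rintro ⟨i, k⟩ ⟨j, l⟩ heq
    simp only [f₁, Sym2.eq_iff] at heq
    have hij : i = j := by
      rcases heq with ⟨h1, _⟩ | ⟨h1, h2⟩
      · exact samebase d₁ (Set.mem_insert _ _) (h1 ▸ Set.mem_insert _ _)
      · exact samebase d₁ (Set.mem_insert _ _)
          (by rw [h1]; exact Set.mem_insert_iff.2 (Or.inr ⟨l, rfl⟩))
    subst hij
    rcases heq with ⟨-, h2⟩ | ⟨h1, -⟩
    · rw [inj₁ i h2]
    · exact absurd h1 (adj₁ i l).ne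
  have injf₂ : Function.Injective f₂ := by
    rintro ⟨i, k⟩ ⟨j, l⟩ heq
    simp only [f₂, Sym2.eq_iff] at heq
    have hij : i = j := by
      rcases heq with ⟨h1, _⟩ | ⟨h1, h2⟩
      · exact samebase d₂ (Set.mem_insert _ _) (h1 ▸ Set.mem_insert _ _)
      · exact samebase d₂ (Set.mem_insert _ _)
          (by rw [h1]; exact Set.mem_insert_iff.2 (Or.inr ⟨l, rfl⟩))
    subst hij
    rcases heq with ⟨-, h2⟩ | ⟨h1, -⟩
    · rw [inj₂ i h2]
    · exact absurd h1 (adj₂ i l).ne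
  set E₁ : Finset (Sym2 V) := Finset.image f₁ Finset.univ with hE₁
  set E₂ : Finset (Sym2 V) := Finset.image f₂ Finset.univ with hE₂
  set H₁ := SimpleGraph.fromEdgeSet (↑E₁ : Set (Sym2 V)) with hH₁
  set H₂ := SimpleGraph.fromEdgeSet (↑E₂ : Set (Sym2 V)) with hH₂
  have hes₁ : H₁.edgeSet = ↑E₁ := by
    rw [hH₁, SimpleGraph.edgeSet_fromEdgeSet]
    refine sdiff_eq_left.2 (Set.disjoint_left.2 ?_)
    intro e hmem hdiag
    simp only [E₁, Finset.coe_image, Set.mem_image] at hmem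
    obtain ⟨z, -, rfl⟩ := hmem
    exact (adj₁ z.1 z.2).ne (Sym2.mk_isDiag_iff.1 hdiag)
  have hes₂ : H₂.edgeSet = ↑E₂ := by
    rw [hH₂, SimpleGraph.edgeSet_fromEdgeSet]
    refine sdiff_eq_left.2 (Set.disjoint_left.2 ?_)
    intro e hmem hdiag
    simp only [E₂, Finset.coe_image, Set.mem_image] at hmem
    obtain ⟨z, -, rfl⟩ := hmem
    exact (adj₂ z.1 z.2).ne (Sym2.mk_isDiag_iff.1 hdiag)
  obtain ⟨π, hπ⟩ := exists_perm_comp F₁ F₂ injF₁ injF₂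
  have hπc : ∀ i, π (c₁ i) = c₂ i := fun i => hπ ⟨i, none⟩
  have hπa : ∀ i k, π (a i k) = b i k := fun i k => hπ ⟨i, some k⟩
  have key : ∀ x y : V, s(π x, π y) ∈ E₂ ↔ s(x, y) ∈ E₁ := by
    intro x y
    simp only [E₁, E₂, Finset.mem_image, Finset.mem_univ, true_and]
    constructor
    · rintro ⟨⟨i, k⟩, hz⟩
      refine ⟨⟨i, k⟩, ?_⟩
      have : s(π x, π y) = s(π (c₁ i), π (a i k)) := by
        rw [hπc, hπa]; exact hz.symm
      have h2 : Sym2.map π s(x, y) = Sym2.map π s(c₁ i, a i k) := by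
        simpa [Sym2.map_pair_eq] using this
      have := Sym2.map.injective π.injective h2
      simp [f₁, this]
    · rintro ⟨⟨i, k⟩, hz⟩
      refine ⟨⟨i, k⟩, ?_⟩
      simp only [f₁] at hz
      have h2 : Sym2.map π s(c₁ i, a i k) = Sym2.map π s(x, y) := by rw [hz]
      simpa [f₂, Sym2.map_pair_eq, hπc, hπa] using h2
  refine ⟨H₁, H₂, ?_, ?_, ?_, ?_, ?_, ?_⟩
  · intro x y hxy
    rw [hH₁, SimpleGraph.fromEdgeSet_adj] at hxy
    obtain ⟨hmem, -⟩ := hxy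
    simp only [E₁, Finset.coe_image, Finset.mem_coe, Finset.mem_image] at hmem
    obtain ⟨z, -, hz⟩ := hmem
    have : s(x, y) ∈ G.edgeSet := by rw [← hz]; exact (adj₁ z.1 z.2)
    exact this
  · intro x y hxy
    rw [hH₂, SimpleGraph.fromEdgeSet_adj] at hxy
    obtain ⟨hmem, -⟩ := hxy
    simp only [E₂, Finset.coe_image, Finset.mem_coe, Finset.mem_image] at hmem
    obtain ⟨z, -, hz⟩ := hmem
    have : s(x, y) ∈ G.edgeSet := by rw [← hz]; exact (adj₂ z.1 z.2)
    exact this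
  · rw [hes₁, hes₂]
    rw [Set.disjoint_left]
    intro e he1 he2
    simp only [E₁, E₂, Finset.coe_image, Finset.mem_coe, Finset.mem_image] at he1 he2
    obtain ⟨z, -, hz⟩ := he1
    obtain ⟨w, -, hw⟩ := he2
    exact ed z.1 w.1 z.2 w.2 (hz.trans hw.symm)
  · refine ⟨⟨π, ?_⟩⟩
    intro x y
    rw [hH₁, hH₂, SimpleGraph.fromEdgeSet_adj, SimpleGraph.fromEdgeSet_adj]
    constructor
    · rintro ⟨hmem, hne⟩
      exact ⟨(key x y).1 hmem, fun hxy => hne (by rw [hxy])⟩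
    · rintro ⟨hmem, hne⟩
      exact ⟨(key x y).2 hmem, fun hxy => hne (π.injective hxy)⟩
  · rw [hes₁, Set.ncard_coe_finset, hE₁,
      Finset.card_image_of_injective _ injf₁, Finset.card_univ, Fintype.card_sigma]
    simp
  · rw [hes₂, Set.ncard_coe_finset, hE₂,
      Finset.card_image_of_injective _ injf₂, Finset.card_univ, Fintype.card_sigma]
    simp

lemma exists_parts {V : Type*} [Fintype V] [DecidableEq V] (G : SimpleGraph V)
    (h : ∀ v, (G.neighborSet v).Nonempty) :
    ∃ P : Finset (V × Finset V),
      (∀ p ∈ P, p.2.Nonempty) ∧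
      (∀ p ∈ P, p.1 ∉ p.2) ∧
      (∀ p ∈ P, ∀ v ∈ p.2, G.Adj p.1 v) ∧
      ((P : Set (V × Finset V)).Pairwise fun p p' =>
        Disjoint (insert p.1 p.2 : Finset V) (insert p'.1 p'.2)) ∧
      (∀ v : V, ∃ p ∈ P, v ∈ (insert p.1 p.2 : Finset V)) := by
  classical
  set nb : V → V := fun v => (h v).choose with hnbdef
  have hnb : ∀ v, G.Adj v (nb v) := fun v => (h v).choose_spec
  -- maximal matching
  set isM : Finset (Sym2 V) → Prop := fun M => (↑M ⊆ G.edgeSet) ∧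
      ∀ e ∈ M, ∀ f ∈ M, e ≠ f → ∀ v ∈ e, v ∉ f with hisM
  obtain ⟨M, hMmem, hmax⟩ : ∃ M ∈ Finset.filter (fun M => isM M) (G.edgeFinset.powerset),
      ∀ x ∈ Finset.filter (fun M => isM M) (G.edgeFinset.powerset), ¬ M < x := by
    obtain ⟨M, hM⟩ := Finset.exists_maximal
      (s := Finset.filter (fun M => isM M) (G.edgeFinset.powerset))
      ⟨∅, by simp [hisM]⟩
    exact ⟨M, hM.1, fun x hx hlt => hlt.not_ge (hM.2 hx hlt.le)⟩
  rw [Finset.mem_filter] at hMmem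
  obtain ⟨-, hMsub, hMmatch⟩ := hMmem
  set covered : V → Prop := fun v => ∃ e ∈ M, v ∈ e with hcovdef
  have huncov : ∀ v, ¬ covered v → covered (nb v) := by
    intro v hv
    by_contra hw
    have hnotmem : s(v, nb v) ∉ M := fun hmem => hv ⟨_, hmem, Sym2.mem_mk_left _ _⟩
    have hM' : isM (insert s(v, nb v) M) := by
      constructor
      · intro e he
        rcases Finset.mem_insert.1 (by exact_mod_cast he) with rfl | he'
        · exact hnb v
        · exact hMsub he'
      · intro e he f hf hef w hwe hwf
        rcases Finset.mem_insert.1 he with rfl | he' <;>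
          rcases Finset.mem_insert.1 hf with rfl | hf'
        · exact hef rfl
        · rcases Sym2.mem_iff.1 hwe with rfl | rfl
          · exact hv ⟨f, hf', hwf⟩
          · exact hw ⟨f, hf', hwf⟩
        · rcases Sym2.mem_iff.1 hwf with rfl | rfl
          · exact hv ⟨e, he', hwe⟩
          · exact hw ⟨e, he', hwe⟩
        · exact hMmatch e he' f hf' hef w hwe hwf
    refine hmax (insert s(v, nb v) M) ?_ (Finset.ssubset_insert hnotmem)
    rw [Finset.mem_filter]
    refine ⟨Finset.mem_powerset.2 ?_, hM'⟩
    intro e he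
    rw [SimpleGraph.mem_edgeFinset]
    exact hM'.1 (by exact_mod_cast he)
  set ptr : V → Finset V := fun w =>
    Finset.univ.filter (fun v => ¬ covered v ∧ nb v = w) with hptrdef
  have hptr_mem : ∀ {v w}, v ∈ ptr w ↔ (¬ covered v ∧ nb v = w) := by
    intro v w; simp [hptrdef]
  have hptr_adj : ∀ {v w}, v ∈ ptr w → G.Adj w v := by
    intro v w hv
    obtain ⟨-, rfl⟩ := hptr_mem.1 hv
    exact (hnb v).symm
  have hptr_disj : ∀ {w w'}, w ≠ w' → ∀ v, v ∈ ptr w → v ∉ ptr w' := by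
    intro w w' hne v hv hv'
    exact hne ((hptr_mem.1 hv).2.symm.trans (hptr_mem.1 hv').2)
  -- endpoints of matching edges
  have hex : ∀ e : Sym2 V, ∃ p : V × V, e = s(p.1, p.2) := by
    intro e
    induction e using Sym2.inductionOn with
    | hf x y => exact ⟨(x, y), rfl⟩
  set X : Sym2 V → V := fun e => (hex e).choose.1 with hXdef
  set Y : Sym2 V → V := fun e => (hex e).choose.2 with hYdef
  have hXY : ∀ e : Sym2 V, e = s(X e, Y e) := fun e => (hex e).choose_spec
  have hXmem : ∀ e : Sym2 V, X e ∈ e := by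
    intro e
    have h1 : X e ∈ s(X e, Y e) := Sym2.mem_mk_left _ _
    rw [← hXY e] at h1
    exact h1
  have hYmem : ∀ e : Sym2 V, Y e ∈ e := by
    intro e
    have h1 : Y e ∈ s(X e, Y e) := Sym2.mem_mk_right _ _
    rw [← hXY e] at h1
    exact h1
  have hadjXY : ∀ e ∈ M, G.Adj (X e) (Y e) := by
    intro e he
    have := hMsub he
    rw [hXY e] at this
    exact this
  have hXcov : ∀ e ∈ M, covered (X e) := fun e he => ⟨e, he, hXmem e⟩
  have hYcov : ∀ e ∈ M, covered (Y e) := fun e he => ⟨e, he, hYmem e⟩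
  have hXuncovptr : ∀ {v} (_ : covered v) {w}, v ∉ ptr w := by
    intro v hv w hmem
    exact (hptr_mem.1 hmem).1 hv
  set partsOf : Sym2 V → Finset (V × Finset V) := fun e =>
    if (ptr (X e)).Nonempty then
      if (ptr (Y e)).Nonempty then {(X e, ptr (X e)), (Y e, ptr (Y e))}
      else {(X e, insert (Y e) (ptr (X e)))}
    else if (ptr (Y e)).Nonempty then {(Y e, insert (X e) (ptr (Y e)))}
    else {(X e, {Y e})} with hpartsOf
  set cluster : Sym2 V → Finset V := fun e =>
    insert (X e) (insert (Y e) (ptr (X e) ∪ ptr (Y e))) with hcluster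
  -- master facts about parts
  have hmaster : ∀ e ∈ M, ∀ p ∈ partsOf e,
      p.2.Nonempty ∧ p.1 ∉ p.2 ∧ (∀ v ∈ p.2, G.Adj p.1 v) ∧
      insert p.1 p.2 ⊆ cluster e := by
    intro e he p hp
    have hxy := hadjXY e he
    have hxney := hxy.ne
    simp only [hpartsOf] at hp
    split_ifs at hp with hx hy hy
    · rcases Finset.mem_insert.1 hp with rfl | hp
      · refine ⟨hx, hXuncovptr (hXcov e he), fun v hv => hptr_adj hv, ?_⟩
        intro v hv
        rcases Finset.mem_insert.1 hv with rfl | hv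
        · exact Finset.mem_insert_self _ _
        · simp only [hcluster, Finset.mem_insert, Finset.mem_union]
          exact Or.inr (Or.inr (Or.inl hv))
      · rw [Finset.mem_singleton] at hp
        subst hp
        refine ⟨hy, hXuncovptr (hYcov e he), fun v hv => hptr_adj hv, ?_⟩
        intro v hv
        rcases Finset.mem_insert.1 hv with rfl | hv
        · exact Finset.mem_insert_of_mem (Finset.mem_insert_self _ _)
        · simp only [hcluster, Finset.mem_insert, Finset.mem_union]
          exact Or.inr (Or.inr (Or.inr hv))
    · rw [Finset.mem_singleton] at hp
      subst hp
      refine ⟨⟨Y e, Finset.mem_insert_self _ _⟩, ?_, ?_, ?_⟩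
      · intro hmem
        rcases Finset.mem_insert.1 hmem with h' | h'
        · exact hxney h'
        · exact hXuncovptr (hXcov e he) h'
      · intro v hv
        rcases Finset.mem_insert.1 hv with rfl | hv
        · exact hxy
        · exact hptr_adj hv
      · intro v hv
        simp only [hcluster, Finset.mem_insert, Finset.mem_union]
        rcases Finset.mem_insert.1 hv with rfl | hv
        · exact Or.inl rfl
        · rcases Finset.mem_insert.1 hv with rfl | hv
          · exact Or.inr (Or.inl rfl)
          · exact Or.inr (Or.inr (Or.inl hv))
    · rw [Finset.mem_singleton] at hp
      subst hp
      refine ⟨⟨X e, Finset.mem_insert_self _ _⟩, ?_, ?_, ?_⟩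
      · intro hmem
        rcases Finset.mem_insert.1 hmem with h' | h'
        · exact hxney h'.symm
        · exact hXuncovptr (hYcov e he) h'
      · intro v hv
        rcases Finset.mem_insert.1 hv with rfl | hv
        · exact hxy.symm
        · exact hptr_adj hv
      · intro v hv
        simp only [hcluster, Finset.mem_insert, Finset.mem_union]
        rcases Finset.mem_insert.1 hv with rfl | hv
        · exact Or.inr (Or.inl rfl)
        · rcases Finset.mem_insert.1 hv with rfl | hv
          · exact Or.inl rfl
          · exact Or.inr (Or.inr (Or.inr hv))
    · rw [Finset.mem_singleton] at hp
      subst hp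
      refine ⟨⟨Y e, Finset.mem_singleton_self _⟩, ?_, ?_, ?_⟩
      · intro hmem
        exact hxney (Finset.mem_singleton.1 hmem)
      · intro v hv
        rw [Finset.mem_singleton] at hv
        subst hv
        exact hxy
      · intro v hv
        simp only [hcluster, Finset.mem_insert, Finset.mem_union]
        rcases Finset.mem_insert.1 hv with rfl | hv
        · exact Or.inl rfl
        · exact Or.inr (Or.inl (Finset.mem_singleton.1 hv))
  -- cluster membership characterization
  have hclus_mem : ∀ e ∈ M, ∀ v ∈ cluster e,
      (covered v ∧ v ∈ e) ∨ (¬ covered v ∧ nb v ∈ e) := by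
    intro e he v hv
    simp only [hcluster, Finset.mem_insert, Finset.mem_union] at hv
    rcases hv with rfl | rfl | hv | hv
    · exact Or.inl ⟨hXcov e he, hXmem e⟩
    · exact Or.inl ⟨hYcov e he, hYmem e⟩
    · obtain ⟨hnc, hnbv⟩ := hptr_mem.1 hv
      exact Or.inr ⟨hnc, by rw [hnbv]; exact hXmem e⟩
    · obtain ⟨hnc, hnbv⟩ := hptr_mem.1 hv
      exact Or.inr ⟨hnc, by rw [hnbv]; exact hYmem e⟩
  have hclus_disj : ∀ e ∈ M, ∀ f ∈ M, e ≠ f → Disjoint (cluster e) (cluster f) := by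
    intro e he f hf hef
    rw [Finset.disjoint_left]
    intro v hve hvf
    rcases hclus_mem e he v hve with ⟨hc, hvine⟩ | ⟨hnc, hnbine⟩ <;>
      rcases hclus_mem f hf v hvf with ⟨hc', hvinf⟩ | ⟨hnc', hnbinf⟩
    · exact hMmatch e he f hf hef v hvine hvinf
    · exact hnc' hc
    · exact hnc hc'
    · exact hMmatch e he f hf hef (nb v) hnbine hnbinf
  set P : Finset (V × Finset V) := M.biUnion partsOf with hPdef
  have hPmem : ∀ p ∈ P, ∃ e ∈ M, p ∈ partsOf e := by
    intro p hp
    simpa [hPdef] using hp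
  refine ⟨P, ?_, ?_, ?_, ?_, ?_⟩
  · intro p hp
    obtain ⟨e, he, hpe⟩ := hPmem p hp
    exact (hmaster e he p hpe).1
  · intro p hp
    obtain ⟨e, he, hpe⟩ := hPmem p hp
    exact (hmaster e he p hpe).2.1
  · intro p hp
    obtain ⟨e, he, hpe⟩ := hPmem p hp
    exact (hmaster e he p hpe).2.2.1
  · intro p hp p' hp' hpp'
    rw [Finset.mem_coe] at hp hp'
    obtain ⟨e, he, hpe⟩ := hPmem p hp
    obtain ⟨f, hf, hpf⟩ := hPmem p' hp'
    by_cases hef : e = f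
    · subst hef
      -- same matching edge: only possible if partsOf e is the doubleton
      simp only [hpartsOf] at hpe hpf
      split_ifs at hpe hpf with hx hy hy
      · -- doubleton case
        have hxney := (hadjXY e he).ne
        rcases Finset.mem_insert.1 hpe with rfl | hpe <;>
          rcases Finset.mem_insert.1 hpf with rfl | hpf
        · exact absurd rfl hpp'
        · rw [Finset.mem_singleton] at hpf
          subst hpf
          rw [Finset.disjoint_left]
          intro v hv hv'
          rcases Finset.mem_insert.1 hv with rfl | hv <;>
            rcases Finset.mem_insert.1 hv' with h' | h'
          · exact hxney h'
          · exact hXuncovptr (hXcov e he) h'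
          · exact hXuncovptr (hYcov e he) (h' ▸ hv)
          · exact hptr_disj hxney v hv h'
        · rw [Finset.mem_singleton] at hpe
          subst hpe
          rw [Finset.disjoint_left]
          intro v hv hv'
          rcases Finset.mem_insert.1 hv with rfl | hv <;>
            rcases Finset.mem_insert.1 hv' with h' | h'
          · exact hxney h'.symm
          · exact hXuncovptr (hYcov e he) h'
          · exact hXuncovptr (hXcov e he) (h' ▸ hv)
          · exact hptr_disj hxney.symm v hv h'
        · rw [Finset.mem_singleton] at hpe hpf
          exact absurd (hpe.trans hpf.symm) hpp'
      · rw [Finset.mem_singleton] at hpe hpf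
        exact absurd (hpe.trans hpf.symm) hpp'
      · rw [Finset.mem_singleton] at hpe hpf
        exact absurd (hpe.trans hpf.symm) hpp'
      · rw [Finset.mem_singleton] at hpe hpf
        exact absurd (hpe.trans hpf.symm) hpp'
    · exact Finset.disjoint_of_subset_left (hmaster e he p hpe).2.2.2
        (Finset.disjoint_of_subset_right (hmaster f hf p' hpf).2.2.2
          (hclus_disj e he f hf hef))
  · -- coverage
    intro v
    have main : ∀ e ∈ M, v ∈ cluster e → ∃ p ∈ partsOf e, v ∈ insert p.1 p.2 := by
      intro e he hv
      simp only [hcluster, Finset.mem_insert, Finset.mem_union] at hv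
      simp only [hpartsOf]
      split_ifs with hx hy hy
      · rcases hv with rfl | rfl | hv | hv
        · exact ⟨(X e, ptr (X e)), Finset.mem_insert_self _ _, Finset.mem_insert_self _ _⟩
        · exact ⟨(Y e, ptr (Y e)), Finset.mem_insert_of_mem (Finset.mem_singleton_self _),
            Finset.mem_insert_self _ _⟩
        · exact ⟨(X e, ptr (X e)), Finset.mem_insert_self _ _, Finset.mem_insert_of_mem hv⟩
        · exact ⟨(Y e, ptr (Y e)), Finset.mem_insert_of_mem (Finset.mem_singleton_self _),
            Finset.mem_insert_of_mem hv⟩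
      · refine ⟨(X e, insert (Y e) (ptr (X e))), Finset.mem_singleton_self _, ?_⟩
        rcases hv with rfl | rfl | hv | hv
        · exact Finset.mem_insert_self _ _
        · exact Finset.mem_insert_of_mem (Finset.mem_insert_self _ _)
        · exact Finset.mem_insert_of_mem (Finset.mem_insert_of_mem hv)
        · exact absurd ⟨v, hv⟩ hy
      · refine ⟨(Y e, insert (X e) (ptr (Y e))), Finset.mem_singleton_self _, ?_⟩
        rcases hv with rfl | rfl | hv | hv
        · exact Finset.mem_insert_of_mem (Finset.mem_insert_self _ _)
        · exact Finset.mem_insert_self _ _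
        · exact absurd ⟨v, hv⟩ hx
        · exact Finset.mem_insert_of_mem (Finset.mem_insert_of_mem hv)
      · refine ⟨(X e, {Y e}), Finset.mem_singleton_self _, ?_⟩
        rcases hv with rfl | rfl | hv | hv
        · exact Finset.mem_insert_self _ _
        · exact Finset.mem_insert_of_mem (Finset.mem_singleton_self _)
        · exact absurd ⟨v, hv⟩ hx
        · exact absurd ⟨v, hv⟩ hy
    by_cases hc : covered v
    · obtain ⟨e, he, hve⟩ := hc
      have hv' : v ∈ cluster e := by
        rw [hXY e] at hve
        simp only [hcluster, Finset.mem_insert, Finset.mem_union]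
        rcases Sym2.mem_iff.1 hve with rfl | rfl
        · exact Or.inl rfl
        · exact Or.inr (Or.inl rfl)
      obtain ⟨p, hp, hvp⟩ := main e he hv'
      exact ⟨p, Finset.mem_biUnion.2 ⟨e, he, hp⟩, hvp⟩
    · obtain ⟨e, he, hwe⟩ := huncov v hc
      have hv' : v ∈ cluster e := by
        rw [hXY e] at hwe
        simp only [hcluster, Finset.mem_insert, Finset.mem_union]
        rcases Sym2.mem_iff.1 hwe with hnbx | hnby
        · exact Or.inr (Or.inr (Or.inl (hptr_mem.2 ⟨hc, hnbx⟩)))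
        · exact Or.inr (Or.inr (Or.inr (hptr_mem.2 ⟨hc, hnby⟩)))
      obtain ⟨p, hp, hvp⟩ := main e he hv'
      exact ⟨p, Finset.mem_biUnion.2 ⟨e, he, hp⟩, hvp⟩

theorem stmt_2 {V : Type*} [Fintype V] (G : SimpleGraph V)
    (h : ∀ v, (G.neighborSet v).Nonempty) :
    ∃ H₁ H₂ : SimpleGraph V, H₁ ≤ G ∧ H₂ ≤ G ∧
      Disjoint H₁.edgeSet H₂.edgeSet ∧ Nonempty (H₁ ≃g H₂) ∧
      ((Fintype.card V : ℝ) - 2) / 4 ≤ H₁.edgeSet.ncard ∧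
      ((Fintype.card V : ℝ) - 2) / 4 ≤ H₂.edgeSet.ncard := by
  classical
  obtain ⟨P, hne, hnotmem, hadj, hdisj, hcov⟩ := exists_parts G h
  set block : V × Finset V → Finset V := fun p => insert p.1 p.2 with hblockdef
  set Pb := P.filter (fun p => 2 ≤ p.2.card) with hPbdef
  set Pl := P.filter (fun p => p.2.card = 1) with hPldef
  set q := Pl.card with hqdef
  have hPbP : ∀ p : {x // x ∈ Pb}, (p : V × Finset V) ∈ P :=
    fun p => (Finset.mem_filter.1 p.2).1
  have hPbcard : ∀ p : {x // x ∈ Pb}, 2 ≤ (p : V × Finset V).2.card :=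
    fun p => (Finset.mem_filter.1 p.2).2
  let lgt : Fin q → V × Finset V := fun j => (Pl.equivFin.symm j : V × Finset V)
  have hlgtPl : ∀ j, lgt j ∈ Pl := fun j => (Pl.equivFin.symm j).2
  have hlgtP : ∀ j, lgt j ∈ P := fun j => (Finset.mem_filter.1 (hlgtPl j)).1
  have hlgtcard : ∀ j, (lgt j).2.card = 1 := fun j => (Finset.mem_filter.1 (hlgtPl j)).2
  have hlgtinj : Function.Injective lgt :=
    fun j j' hjj => Pl.equivFin.symm.injective (Subtype.coe_injective hjj)
  have hleaf : ∀ j, ((lgt j).2).Nonempty := fun j => by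
    have := hlgtcard j; exact Finset.card_pos.1 (by omega)
  let leaf : Fin q → V := fun j => (hleaf j).choose
  have hleafmem : ∀ j, leaf j ∈ (lgt j).2 := fun j => (hleaf j).choose_spec
  let idx0 : Fin (q / 2) → Fin q := fun j => ⟨2 * j.val, by have := j.isLt; omega⟩
  let idx1 : Fin (q / 2) → Fin q := fun j => ⟨2 * j.val + 1, by have := j.isLt; omega⟩
  let ι : Type _ := {x // x ∈ Pb} ⊕ Fin (q / 2)
  let sz : ι → ℕ := Sum.elim (fun p => (p : V × Finset V).2.card / 2) (fun _ => 1)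
  let enum : (p : V × Finset V) → Fin p.2.card → V := fun p k => (p.2.equivFin.symm k : V)
  have henum_mem : ∀ p k, enum p k ∈ p.2 := fun p k => (p.2.equivFin.symm k).2
  have henum_inj : ∀ p, Function.Injective (enum p) :=
    fun p k l hkl => p.2.equivFin.symm.injective (Subtype.coe_injective hkl)
  let c₁ : ι → V := Sum.elim (fun p => (p : V × Finset V).1) (fun j => (lgt (idx0 j)).1)
  let c₂ : ι → V := Sum.elim (fun p => (p : V × Finset V).1) (fun j => (lgt (idx1 j)).1)
  let a : (i : ι) → Fin (sz i) → V := fun i =>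
    match i with
    | Sum.inl p => fun k => enum (p : V × Finset V)
        ⟨k.val, by
          have hk : k.val < (p : V × Finset V).2.card / 2 := k.isLt
          omega⟩
    | Sum.inr j => fun _ => leaf (idx0 j)
  let b : (i : ι) → Fin (sz i) → V := fun i =>
    match i with
    | Sum.inl p => fun k => enum (p : V × Finset V)
        ⟨(p : V × Finset V).2.card / 2 + k.val, by
          have hk : k.val < (p : V × Finset V).2.card / 2 := k.isLt
          omega⟩
    | Sum.inr j => fun _ => leaf (idx1 j)
  let pt₁ : ι → V × Finset V := Sum.elim (fun p => (p : V × Finset V)) (fun j => lgt (idx0 j))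
  let pt₂ : ι → V × Finset V := Sum.elim (fun p => (p : V × Finset V)) (fun j => lgt (idx1 j))
  have hpt₁P : ∀ i, pt₁ i ∈ P := by rintro (p | j)
                                    · exact hPbP p
                                    · exact hlgtP (idx0 j)
  have hpt₂P : ∀ i, pt₂ i ∈ P := by rintro (p | j)
                                    · exact hPbP p
                                    · exact hlgtP (idx1 j)
  have hsupp₁ : ∀ i, (insert (c₁ i) (Set.range (a i)) : Set V) ⊆ ↑(block (pt₁ i)) := by
    rintro (p | j) x hx <;>
      rcases Set.mem_insert_iff.1 hx with rfl | ⟨k, rfl⟩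
    · exact Finset.mem_coe.2 (Finset.mem_insert_self _ _)
    · exact Finset.mem_coe.2 (Finset.mem_insert_of_mem (henum_mem _ _))
    · exact Finset.mem_coe.2 (Finset.mem_insert_self _ _)
    · exact Finset.mem_coe.2 (Finset.mem_insert_of_mem (hleafmem (idx0 j)))
  have hsupp₂ : ∀ i, (insert (c₂ i) (Set.range (b i)) : Set V) ⊆ ↑(block (pt₂ i)) := by
    rintro (p | j) x hx <;>
      rcases Set.mem_insert_iff.1 hx with rfl | ⟨k, rfl⟩
    · exact Finset.mem_coe.2 (Finset.mem_insert_self _ _)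
    · exact Finset.mem_coe.2 (Finset.mem_insert_of_mem (henum_mem _ _))
    · exact Finset.mem_coe.2 (Finset.mem_insert_self _ _)
    · exact Finset.mem_coe.2 (Finset.mem_insert_of_mem (hleafmem (idx1 j)))
  have hpt₁inj : Function.Injective pt₁ := by
    rintro (p | j) (p' | j') hpp
    · exact congrArg Sum.inl (Subtype.ext hpp)
    · exfalso
      have h1 := hPbcard p
      have h2 := hlgtcard (idx0 j')
      rw [show (p : V × Finset V) = lgt (idx0 j') from hpp] at h1
      omega
    · exfalso
      have h1 := hPbcard p'
      have h2 := hlgtcard (idx0 j)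
      rw [show (p' : V × Finset V) = lgt (idx0 j) from hpp.symm] at h1
      omega
    · refine congrArg Sum.inr ?_
      have h99 := hlgtinj hpp
      have h2 := congrArg Fin.val h99
      have h3 : 2 * (j : ℕ) = 2 * (j' : ℕ) := h2
      exact Fin.ext (by omega)
  have hpt₂inj : Function.Injective pt₂ := by
    rintro (p | j) (p' | j') hpp
    · exact congrArg Sum.inl (Subtype.ext hpp)
    · exfalso
      have h1 := hPbcard p
      have h2 := hlgtcard (idx1 j')
      rw [show (p : V × Finset V) = lgt (idx1 j') from hpp] at h1
      omega
    · exfalso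
      have h1 := hPbcard p'
      have h2 := hlgtcard (idx1 j)
      rw [show (p' : V × Finset V) = lgt (idx1 j) from hpp.symm] at h1
      omega
    · refine congrArg Sum.inr ?_
      have h99 := hlgtinj hpp
      have h2 := congrArg Fin.val h99
      have h3 : 2 * (j : ℕ) + 1 = 2 * (j' : ℕ) + 1 := h2
      exact Fin.ext (by omega)
  have hbl : ∀ i i', pt₁ i ≠ pt₂ i' → Disjoint (block (pt₁ i)) (block (pt₂ i')) :=
    fun i i' hne' => hdisj (Finset.mem_coe.2 (hpt₁P i)) (Finset.mem_coe.2 (hpt₂P i')) hne'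
  have d₁ : Pairwise fun i j => Disjoint (insert (c₁ i) (Set.range (a i)))
      (insert (c₁ j) (Set.range (a j))) := by
    intro i j hij
    have hne' : pt₁ i ≠ pt₁ j := fun e => hij (hpt₁inj e)
    have hdj : Disjoint (block (pt₁ i)) (block (pt₁ j)) :=
      hdisj (Finset.mem_coe.2 (hpt₁P i)) (Finset.mem_coe.2 (hpt₁P j)) hne'
    exact Disjoint.mono (hsupp₁ i) (hsupp₁ j) (Finset.disjoint_coe.2 hdj)
  have d₂ : Pairwise fun i j => Disjoint (insert (c₂ i) (Set.range (b i)))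
      (insert (c₂ j) (Set.range (b j))) := by
    intro i j hij
    have hne' : pt₂ i ≠ pt₂ j := fun e => hij (hpt₂inj e)
    have hdj : Disjoint (block (pt₂ i)) (block (pt₂ j)) :=
      hdisj (Finset.mem_coe.2 (hpt₂P i)) (Finset.mem_coe.2 (hpt₂P j)) hne'
    exact Disjoint.mono (hsupp₂ i) (hsupp₂ j) (Finset.disjoint_coe.2 hdj)
  have adj₁ : ∀ i k, G.Adj (c₁ i) (a i k) := by
    rintro (p | j) k
    · exact hadj _ (hPbP p) _ (henum_mem _ _)
    · exact hadj _ (hlgtP (idx0 j)) _ (hleafmem (idx0 j))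
  have adj₂ : ∀ i k, G.Adj (c₂ i) (b i k) := by
    rintro (p | j) k
    · exact hadj _ (hPbP p) _ (henum_mem _ _)
    · exact hadj _ (hlgtP (idx1 j)) _ (hleafmem (idx1 j))
  have inj₁ : ∀ i, Function.Injective (a i) := by
    rintro (p | j)
    · intro k l hkl
      have h2 := henum_inj _ hkl
      have h4 := congrArg Fin.val h2
      have h3 : k.val = l.val := h4
      exact Fin.ext h3
    · intro k l _
      have hk : (k : ℕ) < 1 := k.isLt
      have hl : (l : ℕ) < 1 := l.isLt
      exact Fin.ext (by omega)
  have inj₂ : ∀ i, Function.Injective (b i) := by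
    rintro (p | j)
    · intro k l hkl
      have h2 := henum_inj _ hkl
      have h4 := congrArg Fin.val h2
      have h3 : (p : V × Finset V).2.card / 2 + k.val
          = (p : V × Finset V).2.card / 2 + l.val := h4
      exact Fin.ext (by omega)
    · intro k l _
      have hk : (k : ℕ) < 1 := k.isLt
      have hl : (l : ℕ) < 1 := l.isLt
      exact Fin.ext (by omega)
  -- membership of the vertices of each edge in the corresponding block
  have hmem₁c : ∀ i, c₁ i ∈ block (pt₁ i) := fun i => hsupp₁ i (Set.mem_insert _ _)
  have hmem₁a : ∀ i k, a i k ∈ block (pt₁ i) :=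
    fun i k => hsupp₁ i (Set.mem_insert_of_mem _ ⟨k, rfl⟩)
  have hmem₂c : ∀ i, c₂ i ∈ block (pt₂ i) := fun i => hsupp₂ i (Set.mem_insert _ _)
  have hmem₂b : ∀ i k, b i k ∈ block (pt₂ i) :=
    fun i k => hsupp₂ i (Set.mem_insert_of_mem _ ⟨k, rfl⟩)
  have ed : ∀ i j k l, s(c₁ i, a i k) ≠ s(c₂ j, b j l) := by
    intro i j k l heq
    by_cases hp : pt₁ i = pt₂ j
    · -- same part: must both be heavy (same one)
      match i, j, k, l, hp, heq with
      | Sum.inl p, Sum.inl p', k, l, hp, heq =>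
        have hpv : (p : V × Finset V) = (p' : V × Finset V) := hp
        obtain rfl : p = p' := Subtype.ext hpv
        rcases Sym2.eq_iff.1 heq with ⟨h1, h2⟩ | ⟨h1, h2⟩
        · -- a i k = b j l : contradiction on indices
          have h3 := henum_inj _ h2
          have h5 := congrArg Fin.val h3
          have h4 : k.val = (p : V × Finset V).2.card / 2 + l.val := h5
          have hk : k.val < (p : V × Finset V).2.card / 2 := k.isLt
          omega
        · -- c₁ i = b j l : center in leaf set
          have hbmem : b (Sum.inl p) l ∈ (p : V × Finset V).2 := henum_mem _ _
          rw [← h1] at hbmem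
          exact hnotmem _ (hPbP p) hbmem
      | Sum.inl p, Sum.inr j', _, _, hp, _ =>
        have h1 := hPbcard p
        have h2 := hlgtcard (idx1 j')
        rw [show (p : V × Finset V) = lgt (idx1 j') from hp] at h1
        omega
      | Sum.inr j', Sum.inl p, _, _, hp, _ =>
        have h1 := hPbcard p
        have h2 := hlgtcard (idx0 j')
        rw [show (p : V × Finset V) = lgt (idx0 j') from hp.symm] at h1
        omega
      | Sum.inr j₁, Sum.inr j₂, _, _, hp, _ =>
        have h99 := hlgtinj hp
        have h2 := congrArg Fin.val h99
        have h3 : 2 * (j₁ : ℕ) = 2 * (j₂ : ℕ) + 1 := h2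
        omega
    · have hdj := hbl i j hp
      rw [Finset.disjoint_left] at hdj
      rcases Sym2.eq_iff.1 heq with ⟨h1, h2⟩ | ⟨h1, h2⟩
      · exact hdj (hmem₁c i) (h1 ▸ hmem₂c j)
      · exact hdj (hmem₁c i) (h1 ▸ hmem₂b j l)
  obtain ⟨H₁, H₂, hle₁, hle₂, hdis, hiso, hnc₁, hnc₂⟩ :=
    gadget G sz c₁ c₂ a b adj₁ adj₂ inj₁ inj₂ d₁ d₂ ed
  -- counting
  have hSsum : ∑ i, sz i = (∑ p ∈ Pb, p.2.card / 2) + q / 2 := by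
    rw [Fintype.sum_sum_type]
    congr 1
    · exact Finset.sum_coe_sort Pb (fun p => p.2.card / 2)
    · have h0 : (∑ _x : Fin (q / 2), 1) = q / 2 := by simp
      exact h0
  have hncard : Fintype.card V = ∑ p ∈ P, (p.2.card + 1) := by
    have hbi : P.biUnion block = Finset.univ := by
      ext v
      simp only [Finset.mem_biUnion, Finset.mem_univ, iff_true]
      exact hcov v
    calc Fintype.card V = (P.biUnion block).card := by rw [hbi, Finset.card_univ]
      _ = ∑ p ∈ P, (block p).card := Finset.card_biUnion
          (fun p hp p' hp' hne' =>
            hdisj (Finset.mem_coe.2 hp) (Finset.mem_coe.2 hp') hne')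
      _ = ∑ p ∈ P, (p.2.card + 1) := Finset.sum_congr rfl
          (fun p hp => Finset.card_insert_of_notMem (hnotmem p hp))
  have hsplit : ∑ p ∈ P, (p.2.card + 1) =
      (∑ p ∈ Pb, (p.2.card + 1)) + ∑ p ∈ Pl, (p.2.card + 1) := by
    rw [← Finset.sum_filter_add_sum_filter_not P (fun p => 2 ≤ p.2.card)]
    congr 1
    apply Finset.sum_congr _ (fun _ _ => rfl)
    ext p
    simp only [Finset.mem_filter, hPldef]
    constructor
    · rintro ⟨hp, hcard⟩
      refine ⟨hp, ?_⟩
      have := Finset.card_pos.2 (hne p hp)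
      omega
    · rintro ⟨hp, hcard⟩
      exact ⟨hp, by omega⟩
  have hPlsum : ∑ p ∈ Pl, (p.2.card + 1) = 2 * q := by
    calc ∑ p ∈ Pl, (p.2.card + 1) = ∑ _p ∈ Pl, 2 := Finset.sum_congr rfl
          (fun p hp => by rw [(Finset.mem_filter.1 hp).2])
      _ = 2 * q := by rw [Finset.sum_const, smul_eq_mul, hqdef, mul_comm]
  have hfinal : Fintype.card V ≤ 4 * (∑ i, sz i) + 2 := by
    rw [hncard, hsplit, hPlsum, hSsum]
    have h1 : ∑ p ∈ Pb, (p.2.card + 1) ≤ ∑ p ∈ Pb, 4 * (p.2.card / 2) :=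
      Finset.sum_le_sum (fun p hp => by
        have := (Finset.mem_filter.1 hp).2
        omega)
    have h3 : ∑ p ∈ Pb, 4 * (p.2.card / 2) = 4 * ∑ p ∈ Pb, p.2.card / 2 :=
      (Finset.mul_sum _ _ _).symm
    omega
  have hbound : ((Fintype.card V : ℝ) - 2) / 4 ≤ ((∑ i, sz i : ℕ) : ℝ) := by
    rw [div_le_iff₀ (by norm_num : (0:ℝ) < 4)]
    have h4 : (Fintype.card V : ℝ) ≤ 4 * ((∑ i, sz i : ℕ) : ℝ) + 2 := by
      exact_mod_cast hfinal
    linarith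
  refine ⟨H₁, H₂, hle₁, hle₂, hdis, hiso, ?_, ?_⟩
  · rw [hnc₁]; exact hbound
  · rw [hnc₂]; exact hbound
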